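/- For every integer θ ≥ 2, the constant Φ_θ satisfies 0 < Φ_θ < ∞ and lim_{κ→∞} κ·λ_c^MF(κ,θ) = Φ_θ, where the limit is taken over integers κ → ∞. -/

import Mathlib

open Filter

/-- Bin(κ,x,θ) = ∑_{i=θ}^{κ} (κ choose i) x^i (1−x)^{κ−i}. -/
noncomputable def binTail (κ : ℕ) (x : ℝ) (θ : ℕ) : ℝ :=
  ∑ i ∈ Finset.Icc θ κ, (κ.choose i : ℝ) * x ^ i * (1 - x) ^ (κ - i)

/-- H(κ,θ,λ;x) = −1 + λ·((1−x)/x)·Bin(κ,x,θ). -/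
noncomputable def Hmf (κ θ : ℕ) (lam x : ℝ) : ℝ :=
  -1 + lam * ((1 - x) / x) * binTail κ x θ

/-- λ_c^MF(κ,θ) = sup{λ ≥ 0 : sup_{x∈(0,1]} H(κ,θ,λ;x) < 0}. -/
noncomputable def lambdaMF (κ θ : ℕ) : ℝ :=
  sSup {lam : ℝ | 0 ≤ lam ∧ sSup ((fun x => Hmf κ θ lam x) '' Set.Ioc 0 1) < 0}

/-- Poisson(γ,θ) = ∑_{i=θ}^{∞} e^{−γ} γ^i / i!. -/
noncomputable def poissonTail (γ : ℝ) (θ : ℕ) : ℝ :=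
  ∑' i : ℕ, Real.exp (-γ) * γ ^ (θ + i) / (θ + i).factorial

/-- Φ_θ = inf_{γ>0} γ / Poisson(γ,θ). -/
noncomputable def Phi (θ : ℕ) : ℝ :=
  sInf ((fun γ => γ / poissonTail γ θ) '' Set.Ioi 0)

open Set

lemma real_exp_tsum (x : ℝ) : Real.exp x = ∑' n : ℕ, x ^ n / n.factorial := by
  rw [Real.exp_eq_exp_ℝ, NormedSpace.exp_eq_tsum_div]

lemma summable_shift (x : ℝ) (θ : ℕ) :
    Summable (fun i : ℕ => x ^ (θ + i) / (θ + i).factorial) :=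
  (Real.summable_pow_div_factorial x).comp_injective (add_right_injective θ)

lemma summable_pt (γ : ℝ) (θ : ℕ) :
    Summable (fun i : ℕ => Real.exp (-γ) * γ ^ (θ + i) / (θ + i).factorial) := by
  simpa [mul_div_assoc] using (summable_shift γ θ).mul_left (Real.exp (-γ))

lemma pt_pos {γ : ℝ} (hγ : 0 < γ) (θ : ℕ) : 0 < poissonTail γ θ := by
  refine Summable.tsum_pos (summable_pt γ θ) (fun i => by positivity) 0 (by positivity)

lemma pt_le_one {γ : ℝ} (hγ : 0 ≤ γ) (θ : ℕ) : poissonTail γ θ ≤ 1 := by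
  have h1 : poissonTail γ θ ≤ ∑' n : ℕ, Real.exp (-γ) * γ ^ n / n.factorial := by
    refine (summable_pt γ θ).tsum_le_tsum_of_inj (fun i => θ + i) (add_right_injective θ)
      (fun c _ => by positivity) (fun b => le_rfl) ?_
    simpa [mul_div_assoc] using (Real.summable_pow_div_factorial γ).mul_left (Real.exp (-γ))
  have h2 : ∑' n : ℕ, Real.exp (-γ) * γ ^ n / n.factorial = 1 := by
    have := real_exp_tsum γ
    rw [show (fun n : ℕ => Real.exp (-γ) * γ ^ n / n.factorial)
        = fun n : ℕ => Real.exp (-γ) * (γ ^ n / n.factorial) by funext n; ring,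
      tsum_mul_left, ← this, ← Real.exp_add]
    simp
  linarith

lemma pt_le_pow {γ : ℝ} (hγ : 0 ≤ γ) (θ : ℕ) :
    poissonTail γ θ ≤ γ ^ θ / θ.factorial := by
  have hsum2 : Summable (fun i : ℕ => γ ^ θ / θ.factorial * (Real.exp (-γ) * γ ^ i / i.factorial)) := by
    apply Summable.mul_left
    simpa [mul_div_assoc] using (Real.summable_pow_div_factorial γ).mul_left (Real.exp (-γ))
  have h1 : poissonTail γ θ ≤ ∑' i : ℕ, γ ^ θ / θ.factorial * (Real.exp (-γ) * γ ^ i / i.factorial) := by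
    refine Summable.tsum_le_tsum (fun i => ?_) (summable_pt γ θ) hsum2
    have hfac : (θ.factorial * i.factorial : ℝ) ≤ (θ + i).factorial := by
      exact_mod_cast Nat.le_of_dvd (θ + i).factorial_pos
        (Nat.factorial_mul_factorial_dvd_factorial_add θ i)
    have hfacpos : (0:ℝ) < θ.factorial * i.factorial := by positivity
    have hnum : Real.exp (-γ) * γ ^ (θ + i) / (θ + i).factorial
        ≤ Real.exp (-γ) * γ ^ (θ + i) / (θ.factorial * i.factorial) := by
      apply div_le_div_of_nonneg_left (by positivity) hfacpos hfac
    calc Real.exp (-γ) * γ ^ (θ + i) / (θ + i).factorial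
        ≤ Real.exp (-γ) * γ ^ (θ + i) / (θ.factorial * i.factorial) := hnum
      _ = γ ^ θ / θ.factorial * (Real.exp (-γ) * γ ^ i / i.factorial) := by
          rw [pow_add]; ring
  have h2 : ∑' i : ℕ, γ ^ θ / θ.factorial * (Real.exp (-γ) * γ ^ i / i.factorial)
      = γ ^ θ / θ.factorial := by
    rw [tsum_mul_left]
    have h3 : ∑' n : ℕ, Real.exp (-γ) * γ ^ n / n.factorial = 1 := by
      rw [show (fun n : ℕ => Real.exp (-γ) * γ ^ n / n.factorial)
          = fun n : ℕ => Real.exp (-γ) * (γ ^ n / n.factorial) by funext n; ring,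
        tsum_mul_left, ← real_exp_tsum γ, ← Real.exp_add]
      simp
    rw [h3, mul_one]
  linarith

lemma pt_le_self {γ : ℝ} (hγ : 0 < γ) {θ : ℕ} (hθ : 1 ≤ θ) : poissonTail γ θ ≤ γ := by
  rcases le_or_gt γ 1 with h | h
  · calc poissonTail γ θ ≤ γ ^ θ / θ.factorial := pt_le_pow hγ.le θ
      _ ≤ γ ^ θ / 1 := by
          apply div_le_div_of_nonneg_left (by positivity) one_pos
          exact_mod_cast θ.factorial_pos
      _ = γ ^ θ := div_one _
      _ ≤ γ ^ 1 := pow_le_pow_of_le_one hγ.le h hθ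
      _ = γ := pow_one γ
  · calc poissonTail γ θ ≤ 1 := pt_le_one hγ.le θ
      _ ≤ γ := h.le

noncomputable def Ssup (θ : ℕ) : ℝ :=
  sSup ((fun γ => poissonTail γ θ / γ) '' Set.Ioi 0)

lemma Aset_ne (θ : ℕ) : ((fun γ => poissonTail γ θ / γ) '' Set.Ioi 0).Nonempty :=
  ⟨poissonTail 1 θ / 1, ⟨1, by norm_num, rfl⟩⟩

lemma Aset_bdd {θ : ℕ} (hθ : 1 ≤ θ) :
    BddAbove ((fun γ => poissonTail γ θ / γ) '' Set.Ioi 0) := by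
  refine ⟨1, ?_⟩
  rintro y ⟨γ, hγ, rfl⟩
  rw [mem_Ioi] at hγ
  exact div_le_one_of_le₀ (pt_le_self hγ hθ) hγ.le

lemma Ssup_pos {θ : ℕ} (hθ : 1 ≤ θ) : 0 < Ssup θ := by
  have h1 : poissonTail 1 θ / 1 ≤ Ssup θ :=
    le_csSup (Aset_bdd hθ) ⟨1, by norm_num, rfl⟩
  have := pt_pos one_pos θ
  simp only [div_one] at h1
  linarith

lemma elem_le_Ssup {θ : ℕ} (hθ : 1 ≤ θ) {γ : ℝ} (hγ : 0 < γ) :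
    poissonTail γ θ / γ ≤ Ssup θ :=
  le_csSup (Aset_bdd hθ) ⟨γ, hγ, rfl⟩

lemma Phi_eq {θ : ℕ} (hθ : 1 ≤ θ) : Phi θ = (Ssup θ)⁻¹ := by
  have hS := Ssup_pos hθ
  refine le_antisymm ?_ ?_
  · -- Phi ≤ S⁻¹
    refine le_of_forall_gt_imp_ge_of_dense fun c hc => ?_
    have hc0 : 0 < c := lt_trans (by positivity) hc
    have hcS : c⁻¹ < Ssup θ := by
      rw [← inv_inv (Ssup θ)]
      exact inv_strictAnti₀ (by positivity) hc
    obtain ⟨y, ⟨γ, hγ, rfl⟩, hy⟩ := exists_lt_of_lt_csSup (Aset_ne θ) hcS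
    rw [mem_Ioi] at hγ
    have hP := pt_pos hγ θ
    simp only at hy
    have h2 : c⁻¹ * γ < poissonTail γ θ := by
      have := (lt_div_iff₀ hγ).mp hy
      nlinarith
    have hyc : γ / poissonTail γ θ < c := by
      rw [div_lt_iff₀ hP]
      have : c * (c⁻¹ * γ) < c * poissonTail γ θ := by
        exact mul_lt_mul_of_pos_left h2 hc0
      rw [← mul_assoc, mul_inv_cancel₀ hc0.ne', one_mul] at this
      exact this
    have hbdd : BddBelow ((fun γ => γ / poissonTail γ θ) '' Set.Ioi 0) := by
      refine ⟨0, ?_⟩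
      rintro z ⟨δ, hδ, rfl⟩
      rw [mem_Ioi] at hδ
      exact div_nonneg hδ.le (pt_pos hδ θ).le
    exact le_trans (csInf_le hbdd ⟨γ, hγ, rfl⟩) hyc.le
  · -- S⁻¹ ≤ Phi
    refine le_csInf ⟨1 / poissonTail 1 θ, ⟨1, by norm_num, rfl⟩⟩ ?_
    rintro y ⟨γ, hγ, rfl⟩
    rw [mem_Ioi] at hγ
    have hP := pt_pos hγ θ
    have h1 : poissonTail γ θ / γ ≤ Ssup θ := elem_le_Ssup hθ hγ
    have h2 : 0 < poissonTail γ θ / γ := by positivity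
    calc (Ssup θ)⁻¹ ≤ (poissonTail γ θ / γ)⁻¹ := by
          apply inv_anti₀ h2 h1
      _ = γ / poissonTail γ θ := by rw [inv_div]

noncomputable def gpoly (κ θ : ℕ) (x : ℝ) : ℝ :=
  ∑ i ∈ Finset.Icc θ κ, (κ.choose i : ℝ) * x ^ (i - 1) * (1 - x) ^ (κ - i + 1)

lemma gpoly_eq (κ : ℕ) {θ : ℕ} (hθ : 1 ≤ θ) {x : ℝ} (hx : x ≠ 0) :
    (1 - x) / x * binTail κ x θ = gpoly κ θ x := by
  unfold binTail gpoly
  rw [Finset.mul_sum]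
  refine Finset.sum_congr rfl fun i hi => ?_
  obtain ⟨h1, h2⟩ := Finset.mem_Icc.mp hi
  have hi1 : 1 ≤ i := le_trans hθ h1
  have hxi : x ^ i = x ^ (i - 1) * x := by
    rw [← pow_succ]; congr 1; omega
  rw [hxi, pow_succ]
  field_simp

lemma gpoly_nonneg (κ θ : ℕ) {x : ℝ} (hx : x ∈ Icc (0:ℝ) 1) : 0 ≤ gpoly κ θ x := by
  obtain ⟨h0, h1⟩ := hx
  refine Finset.sum_nonneg fun i _ => ?_
  have : (0:ℝ) ≤ 1 - x := by linarith
  positivity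

lemma gpoly_cont (κ θ : ℕ) : Continuous (gpoly κ θ) := by
  unfold gpoly; fun_prop

lemma gpoly_zero (κ : ℕ) {θ : ℕ} (hθ : 2 ≤ θ) : gpoly κ θ 0 = 0 := by
  refine Finset.sum_eq_zero fun i hi => ?_
  obtain ⟨h1, _⟩ := Finset.mem_Icc.mp hi
  rw [zero_pow (by omega)]; ring

lemma gpoly_one (κ θ : ℕ) : gpoly κ θ 1 = 0 := by
  refine Finset.sum_eq_zero fun i hi => ?_
  rw [sub_self, zero_pow (by omega)]; ring

noncomputable def Msup (κ θ : ℕ) : ℝ := sSup (gpoly κ θ '' Icc 0 1)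

lemma Micc_bdd (κ θ : ℕ) : BddAbove (gpoly κ θ '' Icc 0 1) :=
  (isCompact_Icc.image (gpoly_cont κ θ)).bddAbove

lemma Mioc_bdd (κ θ : ℕ) : BddAbove (gpoly κ θ '' Ioc 0 1) :=
  (Micc_bdd κ θ).mono (image_mono Ioc_subset_Icc_self)

lemma Mioc_ne (κ θ : ℕ) : (gpoly κ θ '' Ioc 0 1).Nonempty :=
  ⟨gpoly κ θ 1, ⟨1, by norm_num, rfl⟩⟩

lemma Msup_eq_Ioc (κ : ℕ) {θ : ℕ} (hθ : 2 ≤ θ) :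
    Msup κ θ = sSup (gpoly κ θ '' Ioc 0 1) := by
  unfold Msup
  rw [← Set.Ioc_insert_left (zero_le_one (α := ℝ)), image_insert_eq,
    csSup_insert (Mioc_bdd κ θ) (Mioc_ne κ θ), gpoly_zero κ hθ]
  have h1 : gpoly κ θ 1 ≤ sSup (gpoly κ θ '' Ioc 0 1) :=
    le_csSup (Mioc_bdd κ θ) ⟨1, by norm_num, rfl⟩
  rw [gpoly_one] at h1
  exact sup_eq_right.mpr h1

lemma Msup_pos {κ θ : ℕ} (hθ : 1 ≤ θ) (hκ : θ ≤ κ) : 0 < Msup κ θ := by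
  have hhalf : (1/2 : ℝ) ∈ Icc (0:ℝ) 1 := by norm_num
  have hterm : (0:ℝ) < (κ.choose θ : ℝ) * (1/2) ^ (θ - 1) * (1 - 1/2) ^ (κ - θ + 1) := by
    have := Nat.choose_pos hκ
    have h2 : (0:ℝ) < (κ.choose θ : ℝ) := by exact_mod_cast this
    positivity
  have hsum : (κ.choose θ : ℝ) * (1/2) ^ (θ - 1) * (1 - 1/2) ^ (κ - θ + 1)
      ≤ gpoly κ θ (1/2) := by
    refine Finset.single_le_sum (f := fun i =>
      (κ.choose i : ℝ) * (1/2) ^ (i - 1) * (1 - 1/2) ^ (κ - i + 1)) (fun i _ => by positivity)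
      (Finset.mem_Icc.mpr ⟨le_rfl, hκ⟩)
  have := le_csSup (Micc_bdd κ θ) ⟨1/2, hhalf, rfl⟩
  unfold Msup
  linarith

lemma Hsup_eq (κ : ℕ) {θ : ℕ} (hθ : 2 ≤ θ) {lam : ℝ} (hlam : 0 ≤ lam) :
    sSup ((fun x => Hmf κ θ lam x) '' Set.Ioc 0 1) = -1 + lam * Msup κ θ := by
  have himg : (fun x => Hmf κ θ lam x) '' Set.Ioc 0 1
      = (fun y => -1 + lam * y) '' (gpoly κ θ '' Ioc 0 1) := by
    rw [image_image]
    apply image_congr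
    intro x hx
    unfold Hmf
    rw [mul_assoc, gpoly_eq κ (by omega) (ne_of_gt hx.1)]
  rw [himg, Msup_eq_Ioc κ hθ]
  have hmono : Monotone (fun y : ℝ => -1 + lam * y) := fun a b hab => by
    simp only; nlinarith
  rw [← Monotone.map_csSup_of_continuousAt (by fun_prop) hmono (Mioc_ne κ θ) (Mioc_bdd κ θ)]

lemma lambdaMF_eq {κ θ : ℕ} (hθ : 2 ≤ θ) (hκ : θ ≤ κ) : lambdaMF κ θ = (Msup κ θ)⁻¹ := by
  have hM := Msup_pos (by omega) hκ
  have hset : {lam : ℝ | 0 ≤ lam ∧ sSup ((fun x => Hmf κ θ lam x) '' Set.Ioc 0 1) < 0}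
      = Ico 0 (Msup κ θ)⁻¹ := by
    ext lam
    simp only [mem_setOf_eq, mem_Ico]
    constructor
    · rintro ⟨h0, hs⟩
      rw [Hsup_eq κ hθ h0] at hs
      refine ⟨h0, ?_⟩
      rw [show (Msup κ θ)⁻¹ = 1/Msup κ θ from (one_div _).symm, lt_div_iff₀ hM]
      nlinarith
    · rintro ⟨h0, hs⟩
      refine ⟨h0, ?_⟩
      rw [Hsup_eq κ hθ h0]
      have : lam * Msup κ θ < 1 := by
        rw [show (Msup κ θ)⁻¹ = 1/Msup κ θ from (one_div _).symm, lt_div_iff₀ hM] at hs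
        nlinarith
      linarith
  unfold lambdaMF
  rw [hset, csSup_Ico (by positivity)]

lemma cast_choose_eq {κ n : ℕ} (h : n ≤ κ) :
    (κ.choose n : ℝ) = (∏ l ∈ Finset.range n, ((κ:ℝ) - l)) / n.factorial := by
  have h1 : (κ.descFactorial n : ℝ) = ∏ l ∈ Finset.range n, ((κ:ℝ) - l) := by
    rw [Nat.descFactorial_eq_prod_range, Nat.cast_prod]
    refine Finset.prod_congr rfl fun l hl => ?_
    have : l ≤ κ := le_trans (Finset.mem_range.mp hl).le h
    push_cast [this]
    ring
  have h2 : (κ.descFactorial n : ℝ) = (n.factorial : ℝ) * (κ.choose n : ℝ) := by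
    exact_mod_cast congrArg Nat.cast (Nat.descFactorial_eq_factorial_mul_choose κ n)
  rw [h2] at h1
  field_simp at h1 ⊢
  linarith [h1]

lemma choose_div_pow_tendsto (n : ℕ) :
    Tendsto (fun κ : ℕ => (κ.choose n : ℝ) / (κ:ℝ) ^ n) atTop (nhds (1 / n.factorial)) := by
  have h1 : Tendsto (fun κ : ℕ => (∏ l ∈ Finset.range n, (1 - (l:ℝ)/κ)) / n.factorial)
      atTop (nhds ((∏ _l ∈ Finset.range n, (1:ℝ)) / n.factorial)) := by
    apply Tendsto.div_const
    apply tendsto_finset_prod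
    intro l _
    simpa using tendsto_const_nhds.sub (tendsto_const_div_atTop_nhds_zero_nat (l:ℝ))
  simp only [Finset.prod_const_one] at h1
  refine h1.congr' ?_
  filter_upwards [eventually_ge_atTop (max n 1)] with κ hκ
  have hn : n ≤ κ := le_trans (le_max_left _ _) hκ
  have hκ1 : 1 ≤ κ := le_trans (le_max_right _ _) hκ
  have hκ0 : ((κ:ℝ)) ≠ 0 := by positivity
  rw [cast_choose_eq hn]
  have hp : ∏ l ∈ Finset.range n, (1 - (l:ℝ)/κ)
      = (∏ l ∈ Finset.range n, ((κ:ℝ) - l)) / (κ:ℝ) ^ n := by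
    rw [show ((κ:ℝ)) ^ n = ∏ _l ∈ Finset.range n, (κ:ℝ) by
      rw [Finset.prod_const, Finset.card_range], ← Finset.prod_div_distrib]
    refine Finset.prod_congr rfl fun l _ => ?_
    field_simp
  rw [hp]
  ring

lemma one_sub_div_pow_tendsto {γ : ℝ} (hγ : 0 < γ) (m : ℕ) :
    Tendsto (fun κ : ℕ => (1 - γ/(κ:ℝ)) ^ (κ - m + 1)) atTop (nhds (Real.exp (-γ))) := by
  have hA : Tendsto (fun κ : ℕ => (1 - γ/(κ:ℝ)) ^ κ) atTop (nhds (Real.exp (-γ))) := by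
    have := Real.tendsto_one_add_div_pow_exp (-γ)
    refine this.congr fun κ => ?_
    rw [neg_div, ← sub_eq_add_neg]
  have hbase : Tendsto (fun κ : ℕ => 1 - γ/(κ:ℝ)) atTop (nhds 1) := by
    simpa using tendsto_const_nhds.sub (tendsto_const_div_atTop_nhds_zero_nat γ)
  have hm : Tendsto (fun κ : ℕ => (1 - γ/(κ:ℝ)) ^ m) atTop (nhds 1) := by
    simpa using hbase.pow m
  have hcomb : Tendsto (fun κ : ℕ => (1 - γ/(κ:ℝ)) ^ κ * (1 - γ/(κ:ℝ)) / (1 - γ/(κ:ℝ)) ^ m)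
      atTop (nhds (Real.exp (-γ))) := by
    have := (hA.mul hbase).div hm one_ne_zero
    rw [mul_one, div_one] at this
    exact this
  refine hcomb.congr' ?_
  filter_upwards [eventually_ge_atTop m, eventually_gt_atTop ⌈γ⌉₊] with κ hκm hκγ
  have hγκ : γ < (κ:ℝ) := lt_of_le_of_lt (Nat.le_ceil γ) (by exact_mod_cast hκγ)
  have hκ0 : (0:ℝ) < κ := lt_trans hγ hγκ
  have hbne : (1 - γ/(κ:ℝ)) ≠ 0 := by
    have : γ/(κ:ℝ) < 1 := (div_lt_one hκ0).mpr hγκ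
    linarith
  rw [div_eq_iff (pow_ne_zero m hbne), ← pow_succ, ← pow_add]
  congr 1
  omega

noncomputable def Tker (θ : ℕ) (γ : ℝ) (κ j : ℕ) : ℝ :=
  if θ + j ≤ κ ∧ γ ≤ κ then
    (κ.choose (θ+j) : ℝ) * (γ/κ) ^ (θ+j-1) * (1 - γ/κ) ^ (κ - (θ+j) + 1) / κ
  else 0

lemma tker_val {θ κ j : ℕ} {γ : ℝ} (hθ : 1 ≤ θ) (hγ : 0 < γ) (h1 : θ + j ≤ κ) (h2 : γ ≤ κ) :
    Tker θ γ κ j = ((κ.choose (θ+j) : ℝ) / (κ:ℝ)^(θ+j)) * γ^(θ+j-1)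
      * (1 - γ/κ)^(κ-(θ+j)+1) := by
  have hκ0 : (0:ℝ) < κ := lt_of_lt_of_le hγ h2
  rw [Tker, if_pos ⟨h1, h2⟩, div_pow]
  have hpow : ((κ:ℝ))^(θ+j) = (κ:ℝ)^(θ+j-1) * κ := by
    rw [← pow_succ]; congr 1; omega
  rw [hpow]
  ring

lemma tker_tendsto {θ : ℕ} (hθ : 1 ≤ θ) {γ : ℝ} (hγ : 0 < γ) (j : ℕ) :
    Tendsto (fun κ : ℕ => Tker θ γ κ j) atTop
      (nhds (Real.exp (-γ) * γ^(θ+j-1) / (θ+j).factorial)) := by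
  set n := θ + j with hn
  have hmain : Tendsto (fun κ : ℕ => ((κ.choose n : ℝ) / (κ:ℝ)^n) * γ^(n-1)
      * (1 - γ/κ)^(κ-n+1)) atTop
      (nhds ((1 / (n.factorial:ℝ)) * γ^(n-1) * Real.exp (-γ))) :=
    ((choose_div_pow_tendsto n).mul_const (γ^(n-1))).mul (one_sub_div_pow_tendsto hγ n)
  have heq : (1 / (n.factorial:ℝ)) * γ^(n-1) * Real.exp (-γ)
      = Real.exp (-γ) * γ^(n-1) / n.factorial := by ring
  rw [heq] at hmain
  refine hmain.congr' ?_
  filter_upwards [eventually_ge_atTop n, eventually_ge_atTop ⌈γ⌉₊] with κ hκn hκγ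
  have h2 : γ ≤ (κ:ℝ) := le_trans (Nat.le_ceil γ) (by exact_mod_cast hκγ)
  rw [tker_val hθ hγ hκn h2]

lemma choose_le_pow_div {κ n : ℕ} : (κ.choose n : ℝ) ≤ (κ:ℝ)^n / n.factorial := by
  have h1 : (κ.descFactorial n : ℝ) ≤ (κ:ℝ)^n := by
    exact_mod_cast Nat.cast_le.mpr (Nat.descFactorial_le_pow κ n)
  have h2 : (κ.descFactorial n : ℝ) = (n.factorial : ℝ) * (κ.choose n : ℝ) := by
    exact_mod_cast congrArg Nat.cast (Nat.descFactorial_eq_factorial_mul_choose κ n)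
  rw [h2] at h1
  rw [le_div_iff₀ (by positivity : (0:ℝ) < n.factorial)]
  linarith

lemma tker_bound {θ : ℕ} (hθ : 1 ≤ θ) {γ : ℝ} (hγ : 0 < γ) (κ j : ℕ) :
    |Tker θ γ κ j| ≤ γ^(θ+j-1) / (θ+j).factorial := by
  by_cases h : θ + j ≤ κ ∧ γ ≤ κ
  · obtain ⟨h1, h2⟩ := h
    have hκ0 : (0:ℝ) < κ := lt_of_lt_of_le hγ h2
    have hb0 : (0:ℝ) ≤ 1 - γ/κ := by
      have : γ/(κ:ℝ) ≤ 1 := (div_le_one hκ0).mpr h2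
      linarith
    have hb1 : (1 - γ/(κ:ℝ)) ≤ 1 := by
      have : 0 ≤ γ/(κ:ℝ) := by positivity
      linarith
    rw [tker_val hθ hγ h1 h2]
    have hval0 : (0:ℝ) ≤ ((κ.choose (θ+j) : ℝ) / (κ:ℝ)^(θ+j)) * γ^(θ+j-1)
        * (1 - γ/κ)^(κ-(θ+j)+1) := by positivity
    rw [abs_of_nonneg hval0]
    have hc : (κ.choose (θ+j) : ℝ) / (κ:ℝ)^(θ+j) ≤ 1 / (θ+j).factorial := by
      rw [div_le_div_iff₀ (by positivity) (by positivity)]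
      have := choose_le_pow_div (κ := κ) (n := θ+j)
      rw [le_div_iff₀ (by positivity : (0:ℝ) < ((θ+j).factorial:ℝ))] at this
      linarith
    have hpow1 : (1 - γ/(κ:ℝ))^(κ-(θ+j)+1) ≤ 1 := pow_le_one₀ hb0 hb1
    calc ((κ.choose (θ+j) : ℝ) / (κ:ℝ)^(θ+j)) * γ^(θ+j-1) * (1 - γ/κ)^(κ-(θ+j)+1)
        ≤ ((κ.choose (θ+j) : ℝ) / (κ:ℝ)^(θ+j)) * γ^(θ+j-1) * 1 := by
          apply mul_le_mul_of_nonneg_left hpow1 (by positivity)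
      _ = ((κ.choose (θ+j) : ℝ) / (κ:ℝ)^(θ+j)) * γ^(θ+j-1) := mul_one _
      _ ≤ (1 / (θ+j).factorial) * γ^(θ+j-1) := by
          apply mul_le_mul_of_nonneg_right hc (by positivity)
      _ = γ^(θ+j-1) / (θ+j).factorial := by ring
  · rw [Tker, if_neg h, abs_zero]
    positivity

lemma bound_summable {θ : ℕ} (hθ : 1 ≤ θ) {γ : ℝ} (hγ : 0 < γ) :
    Summable (fun j : ℕ => γ^(θ+j-1) / (θ+j).factorial) := by
  refine Summable.of_nonneg_of_le (fun j => by positivity) (fun j => ?_) (summable_shift γ (θ-1))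
  have he : θ + j - 1 = θ - 1 + j := by omega
  rw [he]
  apply div_le_div_of_nonneg_left (by positivity) (by positivity)
  exact_mod_cast Nat.factorial_le (by omega : θ - 1 + j ≤ θ + j)

lemma tsum_limit {θ : ℕ} (hθ : 1 ≤ θ) {γ : ℝ} (hγ : 0 < γ) :
    ∑' j : ℕ, Real.exp (-γ) * γ^(θ+j-1) / (θ+j).factorial = poissonTail γ θ / γ := by
  rw [poissonTail, ← tsum_div_const]
  refine tsum_congr fun j => ?_
  have hp : γ^(θ+j) = γ^(θ+j-1) * γ := by rw [← pow_succ]; congr 1; omega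
  rw [hp]
  field_simp

lemma tker_eq_gpoly {θ : ℕ} (hθ : 1 ≤ θ) {γ : ℝ} (hγ : 0 < γ) {κ : ℕ} (hκ : γ ≤ κ) :
    ∑' j : ℕ, Tker θ γ κ j = gpoly κ θ (γ/κ) / κ := by
  by_cases hθκ : θ ≤ κ
  · have h1 : ∑' j : ℕ, Tker θ γ κ j = ∑ j ∈ Finset.range (κ + 1 - θ), Tker θ γ κ j := by
      refine tsum_eq_sum fun j hj => ?_
      rw [Finset.mem_range, not_lt] at hj
      rw [Tker, if_neg]
      push_neg
      intro h'
      omega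
    rw [h1, gpoly, ← Finset.Ico_add_one_right_eq_Icc, Finset.sum_Ico_eq_sum_range, Finset.sum_div]
    refine Finset.sum_congr rfl fun j hj => ?_
    rw [Finset.mem_range] at hj
    rw [Tker, if_pos ⟨by omega, hκ⟩]
  · have h0 : gpoly κ θ (γ/κ) = 0 := by
      rw [gpoly, Finset.Icc_eq_empty (by omega), Finset.sum_empty]
    rw [h0, zero_div]
    have hz : (fun j : ℕ => Tker θ γ κ j) = fun _ => 0 := by
      funext j
      rw [Tker, if_neg]
      rintro ⟨h', -⟩
      omega
    rw [hz, tsum_zero]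

lemma gp_tendsto {θ : ℕ} (hθ : 1 ≤ θ) {γ : ℝ} (hγ : 0 < γ) :
    Tendsto (fun κ : ℕ => gpoly κ θ (γ/κ) / κ) atTop (nhds (poissonTail γ θ / γ)) := by
  have hdom := tendsto_tsum_of_dominated_convergence (𝓕 := atTop)
    (f := fun κ j => Tker θ γ κ j)
    (g := fun j => Real.exp (-γ) * γ^(θ+j-1) / (θ+j).factorial)
    (bound := fun j => γ^(θ+j-1) / (θ+j).factorial)
    (bound_summable hθ hγ) (tker_tendsto hθ hγ)
    (Eventually.of_forall fun κ => fun j => by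
      rw [Real.norm_eq_abs]; exact tker_bound hθ hγ κ j)
  rw [tsum_limit hθ hγ] at hdom
  refine hdom.congr' ?_
  filter_upwards [eventually_ge_atTop ⌈γ⌉₊] with κ hκγ
  exact tker_eq_gpoly hθ hγ (le_trans (Nat.le_ceil γ) (by exact_mod_cast hκγ))

lemma binTail_nonneg (κ θ : ℕ) {x : ℝ} (h0 : 0 ≤ x) (h1 : x ≤ 1) : 0 ≤ binTail κ x θ := by
  refine Finset.sum_nonneg fun i _ => ?_
  have : (0:ℝ) ≤ 1 - x := by linarith
  positivity

lemma binTail_le_one (κ θ : ℕ) {x : ℝ} (h0 : 0 ≤ x) (h1 : x ≤ 1) : binTail κ x θ ≤ 1 := by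
  have h1x : (0:ℝ) ≤ 1 - x := by linarith
  have h2 : binTail κ x θ ≤ ∑ i ∈ Finset.range (κ+1), (κ.choose i:ℝ) * x^i * (1-x)^(κ-i) := by
    refine Finset.sum_le_sum_of_subset_of_nonneg ?_ (fun i _ _ => by positivity)
    intro i hi
    rw [Finset.mem_range]
    exact Nat.lt_succ_of_le (Finset.mem_Icc.mp hi).2
  have h3 : ∑ i ∈ Finset.range (κ+1), (κ.choose i:ℝ) * x^i * (1-x)^(κ-i)
      = (x + (1-x))^κ := by
    rw [add_pow]
    refine Finset.sum_congr rfl fun i _ => by ring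
  rw [h3] at h2
  simpa using h2

lemma exp_tsum_shift (γ : ℝ) (θ : ℕ) :
    ∑' j : ℕ, γ^(θ+j)/(θ+j).factorial = Real.exp γ * poissonTail γ θ := by
  have h : poissonTail γ θ = Real.exp (-γ) * ∑' j : ℕ, γ^(θ+j)/(θ+j).factorial := by
    rw [poissonTail, ← tsum_mul_left]
    exact tsum_congr fun j => by ring
  rw [h, ← mul_assoc, ← Real.exp_add]
  simp

lemma binTail_le_poisson {κ θ : ℕ} (hθ : 1 ≤ θ) (hκ : 1 ≤ κ) {x : ℝ}
    (hx : 0 < x) (hx1 : x < 1) :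
    binTail κ x θ ≤ Real.exp ((κ:ℝ)*x/(1-x) - κ*x) * poissonTail ((κ:ℝ)*x/(1-x)) θ := by
  have h1x : (0:ℝ) < 1 - x := by linarith
  set γ' : ℝ := (κ:ℝ)*x/(1-x) with hγ'def
  have hγ' : 0 < γ' := by positivity
  have hterm : ∀ i ∈ Finset.Icc θ κ,
      (κ.choose i : ℝ) * x^i * (1-x)^(κ-i) ≤ Real.exp (-(κ*x)) * (γ'^i / i.factorial) := by
    intro i hi
    obtain ⟨hi1, hi2⟩ := Finset.mem_Icc.mp hi
    have s1 : (κ.choose i : ℝ) * x^i * (1-x)^(κ-i)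
        ≤ ((κ:ℝ)^i / i.factorial) * x^i * (1-x)^(κ-i) := by
      apply mul_le_mul_of_nonneg_right (mul_le_mul_of_nonneg_right choose_le_pow_div
        (by positivity)) (by positivity)
    have s2 : ((κ:ℝ)^i / i.factorial) * x^i * (1-x)^(κ-i)
        = (γ'^i / i.factorial) * (1-x)^κ := by
      rw [pow_sub₀ (1-x) (ne_of_gt h1x) hi2, hγ'def, div_pow, mul_pow]
      field_simp
    have s3 : (1-x)^κ ≤ Real.exp (-(κ*x)) := by
      have hb : (1-x) ≤ Real.exp (-x) := by
        have := Real.add_one_le_exp (-x)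
        linarith
      calc (1-x)^κ ≤ (Real.exp (-x))^κ := pow_le_pow_left₀ h1x.le hb κ
        _ = Real.exp (-(κ*x)) := by rw [← Real.exp_nat_mul]; ring_nf
    calc (κ.choose i : ℝ) * x^i * (1-x)^(κ-i)
        ≤ (γ'^i / i.factorial) * (1-x)^κ := by rw [← s2]; exact s1
      _ ≤ (γ'^i / i.factorial) * Real.exp (-(κ*x)) := by
          apply mul_le_mul_of_nonneg_left s3 (by positivity)
      _ = Real.exp (-(κ*x)) * (γ'^i / i.factorial) := by ring
  have hsum1 : binTail κ x θ ≤ Real.exp (-(κ*x)) * ∑ i ∈ Finset.Icc θ κ, γ'^i / i.factorial := by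
    rw [Finset.mul_sum]
    exact Finset.sum_le_sum hterm
  have hsum2 : ∑ i ∈ Finset.Icc θ κ, γ'^i / i.factorial
      ≤ ∑' j : ℕ, γ'^(θ+j)/(θ+j).factorial := by
    rw [← Finset.Ico_add_one_right_eq_Icc, Finset.sum_Ico_eq_sum_range]
    exact Summable.sum_le_tsum (Finset.range (κ + 1 - θ)) (fun j _ => by positivity) (summable_shift γ' θ)
  have hsum3 : ∑' j : ℕ, γ'^(θ+j)/(θ+j).factorial = Real.exp γ' * poissonTail γ' θ :=
    exp_tsum_shift γ' θ
  have hP : 0 ≤ poissonTail γ' θ := by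
    refine tsum_nonneg fun j => by positivity
  calc binTail κ x θ ≤ Real.exp (-(κ*x)) * ∑ i ∈ Finset.Icc θ κ, γ'^i / i.factorial := hsum1
    _ ≤ Real.exp (-(κ*x)) * (Real.exp γ' * poissonTail γ' θ) := by
        apply mul_le_mul_of_nonneg_left _ (Real.exp_pos _).le
        rw [← hsum3]; exact hsum2
    _ = Real.exp (γ' - κ*x) * poissonTail γ' θ := by
        rw [Real.exp_sub, Real.exp_neg]
        field_simp

lemma m_tendsto {θ : ℕ} (hθ : 2 ≤ θ) :
    Tendsto (fun κ : ℕ => Msup κ θ / κ) atTop (nhds (Ssup θ)) := by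
  rw [tendsto_order]
  constructor
  · intro a ha
    obtain ⟨y, ⟨γ, hγ, rfl⟩, hy⟩ := exists_lt_of_lt_csSup (Aset_ne θ) ha
    rw [mem_Ioi] at hγ
    simp only at hy
    have hgp := gp_tendsto (by omega : 1 ≤ θ) hγ
    have hev : ∀ᶠ κ : ℕ in atTop, a < gpoly κ θ (γ/κ) / κ :=
      hgp.eventually (eventually_gt_nhds hy)
    filter_upwards [hev, eventually_ge_atTop ⌈γ⌉₊] with κ h1 h2
    have hγκ : γ ≤ (κ:ℝ) := le_trans (Nat.le_ceil γ) (by exact_mod_cast h2)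
    have hκ0 : (0:ℝ) < κ := lt_of_lt_of_le hγ hγκ
    have hmem : γ/(κ:ℝ) ∈ Icc (0:ℝ) 1 := ⟨by positivity, (div_le_one hκ0).mpr hγκ⟩
    have hle : gpoly κ θ (γ/κ) ≤ Msup κ θ := le_csSup (Micc_bdd κ θ) ⟨γ/κ, hmem, rfl⟩
    calc a < gpoly κ θ (γ/κ) / κ := h1
      _ ≤ Msup κ θ / κ := by gcongr
  · intro c hc
    have hS := Ssup_pos (show 1 ≤ θ by omega)
    set b : ℝ := max 1 (Ssup θ)⁻¹ with hbdef
    have hb1 : (1:ℝ) ≤ b := le_max_left _ _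
    have hb0 : (0:ℝ) < b := lt_of_lt_of_le one_pos hb1
    have hbinv : b⁻¹ ≤ Ssup θ := by
      have h1 : (Ssup θ)⁻¹ ≤ b := le_max_right _ _
      calc b⁻¹ ≤ ((Ssup θ)⁻¹)⁻¹ := inv_anti₀ (by positivity) h1
        _ = Ssup θ := inv_inv _
    have hexp : Tendsto (fun κ : ℕ => Real.exp (b^2 / ((κ:ℝ) - b)) * Ssup θ)
        atTop (nhds (Ssup θ)) := by
      have h1 : Tendsto (fun κ : ℕ => (κ:ℝ) - b) atTop atTop := by
        refine (tendsto_atTop_add_const_right _ (-b) tendsto_natCast_atTop_atTop).congr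
          fun κ => by ring
      have h2 : Tendsto (fun κ : ℕ => b^2 / ((κ:ℝ) - b)) atTop (nhds 0) :=
        Tendsto.div_atTop tendsto_const_nhds h1
      have h3 := (Real.continuous_exp.tendsto 0).comp h2
      rw [Real.exp_zero] at h3
      simpa using h3.mul_const (Ssup θ)
    have hev1 : ∀ᶠ κ : ℕ in atTop, Real.exp (b^2/((κ:ℝ)-b)) * Ssup θ < c :=
      hexp.eventually (eventually_lt_nhds hc)
    filter_upwards [hev1, eventually_gt_atTop ⌈b⌉₊, eventually_ge_atTop θ] with κ h1 h2 h3
    have hκb : b < (κ:ℝ) := lt_of_le_of_lt (Nat.le_ceil b) (by exact_mod_cast h2)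
    have hκ0 : (0:ℝ) < κ := lt_trans hb0 hκb
    have hκ1 : 1 ≤ κ := by exact_mod_cast Nat.one_le_cast.mp (by exact_mod_cast le_of_lt (lt_of_le_of_lt hb1 hκb))
    set A : ℝ := max b⁻¹ (Real.exp (b^2/((κ:ℝ)-b)) * Ssup θ) with hAdef
    have hmax : ∀ x ∈ Icc (0:ℝ) 1, gpoly κ θ x ≤ κ * A := by
      intro x hx
      rcases eq_or_lt_of_le hx.1 with hx0 | hx0
      · rw [← hx0, gpoly_zero κ hθ]
        have : (0:ℝ) < A := lt_of_lt_of_le (by positivity) (le_max_left _ _)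
        positivity
      · have hxne : x ≠ 0 := ne_of_gt hx0
        rw [← gpoly_eq κ (by omega) hxne]
        have hB0 : 0 ≤ binTail κ x θ := binTail_nonneg κ θ hx0.le hx.2
        rcases le_or_gt b ((κ:ℝ)*x) with hbx | hbx
        · have hB1 : binTail κ x θ ≤ 1 := binTail_le_one κ θ hx0.le hx.2
          have step1 : (1-x)/x * binTail κ x θ ≤ 1/x := by
            have h1x : (1-x)/x ≤ 1/x := by gcongr <;> linarith [hx.2]
            calc (1-x)/x * binTail κ x θ ≤ 1/x * binTail κ x θ := by
                  apply mul_le_mul_of_nonneg_right h1x hB0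
              _ ≤ 1/x * 1 := by
                  apply mul_le_mul_of_nonneg_left hB1 (by positivity)
              _ = 1/x := mul_one _
          have step2 : 1/x ≤ (κ:ℝ) * b⁻¹ := by
            rw [div_le_iff₀ hx0]
            have hrw : (κ:ℝ) * b⁻¹ * x = ((κ:ℝ) * x) / b := by
              rw [div_eq_mul_inv]; ring
            rw [hrw, le_div_iff₀ hb0]
            linarith
          have step3 : (κ:ℝ) * b⁻¹ ≤ κ * A := by
            apply mul_le_mul_of_nonneg_left (le_max_left _ _) hκ0.le
          linarith
        · have hx1 : x < 1 := by
            by_contra hcon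
            push_neg at hcon
            have : x = 1 := le_antisymm hx.2 hcon
            rw [this, mul_one] at hbx
            linarith
          have h1x : (0:ℝ) < 1 - x := by linarith
          set γ' : ℝ := (κ:ℝ)*x/(1-x) with hγ'def
          have hγ'0 : 0 < γ' := by positivity
          have hbp := binTail_le_poisson (show 1 ≤ θ by omega) hκ1 hx0 hx1
          have hPpos := pt_pos hγ'0 θ
          have hfrac : (1-x)/x = (κ:ℝ)/γ' := by
            rw [hγ'def]
            field_simp
          have hexple : γ' - (κ:ℝ)*x ≤ b^2/((κ:ℝ)-b) := by
            have hid : γ' - (κ:ℝ)*x = ((κ:ℝ)*x) * (x/(1-x)) := by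
              rw [hγ'def]; field_simp; ring
            have hxb : x/(1-x) ≤ b/((κ:ℝ)-b) := by
              rw [div_le_div_iff₀ h1x (by linarith)]
              nlinarith
            rw [hid]
            calc ((κ:ℝ)*x) * (x/(1-x)) ≤ b * (b/((κ:ℝ)-b)) := by
                  apply mul_le_mul hbx.le hxb (by positivity) hb0.le
              _ = b^2/((κ:ℝ)-b) := by ring
          calc (1-x)/x * binTail κ x θ
              ≤ (1-x)/x * (Real.exp (γ' - κ*x) * poissonTail γ' θ) := by
                apply mul_le_mul_of_nonneg_left hbp (by positivity)
            _ = (κ:ℝ) * (Real.exp (γ' - κ*x) * (poissonTail γ' θ / γ')) := by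
                rw [hfrac]; field_simp
            _ ≤ (κ:ℝ) * (Real.exp (b^2/((κ:ℝ)-b)) * Ssup θ) := by
                apply mul_le_mul_of_nonneg_left _ hκ0.le
                apply mul_le_mul (Real.exp_le_exp.mpr hexple)
                  (elem_le_Ssup (by omega) hγ'0) (by positivity) (Real.exp_pos _).le
            _ ≤ (κ:ℝ) * A := by
                apply mul_le_mul_of_nonneg_left (le_max_right _ _) hκ0.le
    have hMle : Msup κ θ ≤ κ * A := by
      refine csSup_le ⟨gpoly κ θ 0, ⟨0, by norm_num, rfl⟩⟩ ?_
      rintro y ⟨x, hx, rfl⟩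
      exact hmax x hx
    have hmA : Msup κ θ / κ ≤ A := by
      rw [div_le_iff₀ hκ0]
      linarith
    have hAlt : A < c := by
      apply max_lt _ h1
      calc b⁻¹ ≤ Ssup θ := hbinv
        _ < c := hc
    linarith

/-- 0 < Φ_θ < ∞ and κ·λ_c^MF(κ,θ) → Φ_θ as κ → ∞. -/
theorem stmt7 (θ : ℕ) (hθ : 2 ≤ θ) :
    0 < Phi θ ∧
    Tendsto (fun κ : ℕ => (κ : ℝ) * lambdaMF κ θ) atTop (nhds (Phi θ)) := by
  have hS := Ssup_pos (show 1 ≤ θ by omega)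
  have hphi : Phi θ = (Ssup θ)⁻¹ := Phi_eq (by omega)
  constructor
  · rw [hphi]; positivity
  · rw [hphi]
    have hm := (m_tendsto hθ).inv₀ (ne_of_gt hS)
    refine hm.congr' ?_
    filter_upwards [eventually_ge_atTop θ] with κ h1
    rw [lambdaMF_eq hθ h1, inv_div, div_eq_mul_inv]
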